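/- Among all probability distributions on N points, the Tsallis extropy JS_α is maximized uniquely by the uniform distribution, i.e., for any probability vector p on N points, JS_α(p) ≤ JS_α(uniform), with equality iff p is uniform. -/

import Mathlib

theorem tsallis_extropy_max_uniform (N : ℕ) (hN : 1 ≤ N)
    (α : ℝ) (hα : 0 < α) (hα1 : α ≠ 1)
    (p : Fin N → ℝ) (hp : ∀ i, 0 ≤ p i) (hsum : ∑ i, p i = 1) :
    ((N : ℝ) - 1 - ∑ i, (1 - p i) ^ α) / (α - 1) ≤
      ((N : ℝ) - 1 - ∑ _i : Fin N, (1 - 1 / (N : ℝ)) ^ α) / (α - 1) ∧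
    (((N : ℝ) - 1 - ∑ i, (1 - p i) ^ α) / (α - 1) =
      ((N : ℝ) - 1 - ∑ _i : Fin N, (1 - 1 / (N : ℝ)) ^ α) / (α - 1) ↔
        ∀ i, p i = 1 / (N : ℝ)) := by
  classical
  have hNpos : (0 : ℝ) < N := by exact_mod_cast hN
  have hNne : (N : ℝ) ≠ 0 := ne_of_gt hNpos
  set w : Fin N → ℝ := fun _ => (N : ℝ)⁻¹ with hw
  have hw0 : ∀ i ∈ Finset.univ, 0 < w i := fun i _ => by positivity
  have hw1 : ∑ i : Fin N, w i = 1 := by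
    simp [hw, Finset.sum_const, Finset.card_univ, mul_comm]
    field_simp
  have hple : ∀ i, p i ≤ 1 := by
    intro i
    calc p i ≤ ∑ j, p j := Finset.single_le_sum (fun j _ => hp j) (Finset.mem_univ i)
    _ = 1 := hsum
  have hmem : ∀ i ∈ Finset.univ, (1 - p i) ∈ Set.Ici (0 : ℝ) := fun i _ => by
    simp [sub_nonneg]; exact hple i
  have hcenter : ∑ i : Fin N, w i • (1 - p i) = 1 - 1 / (N : ℝ) := by
    simp only [hw, smul_eq_mul]
    rw [← Finset.mul_sum, Finset.sum_sub_distrib, hsum, Finset.sum_const, Finset.card_univ,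
      Fintype.card_fin]
    field_simp
    rw [nsmul_eq_mul, mul_one]
  -- uniform sum
  have hUsum : ∑ _i : Fin N, (1 - 1 / (N : ℝ)) ^ α = (N : ℝ) * (1 - 1 / (N : ℝ)) ^ α := by
    simp [Finset.sum_const, Finset.card_univ, nsmul_eq_mul]
  set S := ∑ i, (1 - p i) ^ α with hS
  set U := (N : ℝ) * (1 - 1 / (N : ℝ)) ^ α with hU
  -- nonstrict Jensen
  have hkey : (1 < α → U ≤ S) ∧ (α < 1 → S ≤ U) := by
    constructor
    · intro h1
      have := (strictConvexOn_rpow h1).convexOn.map_sum_le (fun i _ => (hw0 i (Finset.mem_univ i)).le) hw1 hmem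
      rw [hcenter] at this
      have : (1 - 1 / (N : ℝ)) ^ α ≤ (N : ℝ)⁻¹ * S := by
        simpa [hw, smul_eq_mul, Finset.mul_sum, hS] using this
      calc U = (N : ℝ) * (1 - 1 / (N : ℝ)) ^ α := rfl
      _ ≤ (N : ℝ) * ((N : ℝ)⁻¹ * S) := by nlinarith
      _ = S := by field_simp
    · intro h1
      have := (Real.strictConcaveOn_rpow hα h1).concaveOn.le_map_sum (fun i _ => (hw0 i (Finset.mem_univ i)).le) hw1 hmem
      rw [hcenter] at this
      have : (N : ℝ)⁻¹ * S ≤ (1 - 1 / (N : ℝ)) ^ α := by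
        simpa [hw, smul_eq_mul, Finset.mul_sum, hS] using this
      calc S = (N : ℝ) * ((N : ℝ)⁻¹ * S) := by field_simp
      _ ≤ (N : ℝ) * (1 - 1 / (N : ℝ)) ^ α := by nlinarith
      _ = U := rfl
  -- strict Jensen when p is not uniform
  have hstrict : (¬ ∀ i, p i = 1 / (N : ℝ)) →
      (1 < α → U < S) ∧ (α < 1 → S < U) := by
    intro hne
    push_neg at hne
    obtain ⟨j, hj⟩ := hne
    have hjk : ∃ j' ∈ Finset.univ, ∃ k ∈ Finset.univ, (1 - p j') ≠ (1 - p k) := by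
      by_contra hcon
      push_neg at hcon
      have hall : ∀ k, p k = p j := by
        intro k
        have := hcon k (Finset.mem_univ k) j (Finset.mem_univ j)
        linarith
      have : (N : ℝ) * p j = 1 := by
        rw [← hsum]
        rw [Finset.sum_congr rfl (fun k _ => hall k)]
        simp [Finset.sum_const, Finset.card_univ, nsmul_eq_mul]
      apply hj
      field_simp at this ⊢
      linarith
    constructor
    · intro h1
      have := (strictConvexOn_rpow h1).map_sum_lt hw0 hw1 hmem hjk
      rw [hcenter] at this
      have : (1 - 1 / (N : ℝ)) ^ α < (N : ℝ)⁻¹ * S := by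
        simpa [hw, smul_eq_mul, Finset.mul_sum, hS] using this
      calc U = (N : ℝ) * (1 - 1 / (N : ℝ)) ^ α := rfl
      _ < (N : ℝ) * ((N : ℝ)⁻¹ * S) := by nlinarith
      _ = S := by field_simp
    · intro h1
      have := (Real.strictConcaveOn_rpow hα h1).lt_map_sum hw0 hw1 hmem hjk
      rw [hcenter] at this
      have : (N : ℝ)⁻¹ * S < (1 - 1 / (N : ℝ)) ^ α := by
        simpa [hw, smul_eq_mul, Finset.mul_sum, hS] using this
      calc S = (N : ℝ) * ((N : ℝ)⁻¹ * S) := by field_simp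
      _ < (N : ℝ) * (1 - 1 / (N : ℝ)) ^ α := by nlinarith
      _ = U := rfl
  rw [hUsum]
  rcases lt_or_gt_of_ne hα1 with hlt | hgt
  · have hS_le : S ≤ U := hkey.2 hlt
    have hden : α - 1 < 0 := by linarith
    constructor
    · apply div_le_div_of_nonpos_of_le (le_of_lt hden)
      linarith
    · constructor
      · intro heq
        by_contra hne
        have h' := (hstrict hne).2 hlt
        have heq' : ((N : ℝ) - 1 - S) = ((N : ℝ) - 1 - U) :=
          (div_left_inj' (by intro h; apply hα1; linarith [sub_eq_zero.mp h])).mp heq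
        linarith
      · intro hall
        have : S = U := by
          rw [hS, hU]
          rw [Finset.sum_congr rfl (fun i _ => by rw [hall i])]
          simp [Finset.sum_const, Finset.card_univ, nsmul_eq_mul]
        rw [this]
  · have hS_ge : U ≤ S := hkey.1 hgt
    have hden : 0 < α - 1 := by linarith
    constructor
    · exact div_le_div_of_nonneg_right (by linarith) hden.le
    · constructor
      · intro heq
        by_contra hne
        have h' := (hstrict hne).1 hgt
        have heq' : ((N : ℝ) - 1 - S) = ((N : ℝ) - 1 - U) :=
          (div_left_inj' (by intro h; apply hα1; linarith [sub_eq_zero.mp h])).mp heq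
        linarith
      · intro hall
        have : S = U := by
          rw [hS, hU]
          rw [Finset.sum_congr rfl (fun i _ => by rw [hall i])]
          simp [Finset.sum_const, Finset.card_univ, nsmul_eq_mul]
        rw [this]
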